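/- The function ρ₂(z) = ((θ₂(0)-θ₂(u₀))e^{-(θ₁(0)+θ₂(u₀))z} - (θ₂(0)+θ₁(u₀))e^{(θ₁(u₀)-θ₁(0))z}) / (e^{θ₁(u₀)z} - e^{-θ₂(u₀)z}) is strictly increasing on (0,∞). -/

import Mathlib

open Real Set

noncomputable def th1 (μ σ r u : ℝ) : ℝ := (Real.sqrt ((μ - u)^2 + 2*r*σ^2) + (μ - u)) / σ^2
noncomputable def th2 (μ σ r u : ℝ) : ℝ := (Real.sqrt ((μ - u)^2 + 2*r*σ^2) - (μ - u)) / σ^2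

noncomputable def rho1 (μ σ r u₀ z : ℝ) : ℝ :=
  ((th1 μ σ r 0 - th1 μ σ r u₀) * Real.exp ((th1 μ σ r u₀ + th2 μ σ r 0) * z)
    - (th1 μ σ r 0 + th2 μ σ r u₀) * Real.exp ((th2 μ σ r 0 - th2 μ σ r u₀) * z)) /
  (Real.exp (th1 μ σ r u₀ * z) - Real.exp (-(th2 μ σ r u₀) * z))

noncomputable def rho2 (μ σ r u₀ z : ℝ) : ℝ :=
  ((th2 μ σ r 0 - th2 μ σ r u₀) * Real.exp (-(th1 μ σ r 0 + th2 μ σ r u₀) * z)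
    - (th2 μ σ r 0 + th1 μ σ r u₀) * Real.exp ((th1 μ σ r u₀ - th1 μ σ r 0) * z)) /
  (Real.exp (th1 μ σ r u₀ * z) - Real.exp (-(th2 μ σ r u₀) * z))

lemma th1_pos (μ σ r u : ℝ) (hσ : 0 < σ) (hr : 0 < r) : 0 < th1 μ σ r u := by
  have h : |μ - u| < Real.sqrt ((μ - u)^2 + 2*r*σ^2) := by
    rw [← Real.sqrt_sq_eq_abs]
    apply Real.sqrt_lt_sqrt (sq_nonneg _)
    have : 0 < 2*r*σ^2 := by positivity
    linarith
  have h2 : -(μ - u) ≤ |μ - u| := neg_le_abs _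
  unfold th1
  apply div_pos (by linarith) (by positivity)

lemma th2_pos (μ σ r u : ℝ) (hσ : 0 < σ) (hr : 0 < r) : 0 < th2 μ σ r u := by
  have h : |μ - u| < Real.sqrt ((μ - u)^2 + 2*r*σ^2) := by
    rw [← Real.sqrt_sq_eq_abs]
    apply Real.sqrt_lt_sqrt (sq_nonneg _)
    have : 0 < 2*r*σ^2 := by positivity
    linarith
  have h2 : (μ - u) ≤ |μ - u| := le_abs_self _
  unfold th2
  apply div_pos (by linarith) (by positivity)

lemma key (a b c d z : ℝ) (ha : 0 < a) (hb : 0 < b) (hz : 0 < z) :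
    ((d - b) * Real.exp (-(c + b) * z) - (d + a) * Real.exp ((a - c) * z)) /
      (Real.exp (a * z) - Real.exp (-b * z))
    = -(d + a) * (Real.exp (c * z))⁻¹
      - (a + b) * (Real.exp (c * z) * (Real.exp (a * z) * Real.exp (b * z) - 1))⁻¹ := by
  have e1 : Real.exp (-(c + b) * z) = (Real.exp (c*z) * Real.exp (b*z))⁻¹ := by
    rw [← Real.exp_add, ← Real.exp_neg]; congr 1; ring
  have e2 : Real.exp ((a - c) * z) = Real.exp (a*z) * (Real.exp (c*z))⁻¹ := by
    rw [← Real.exp_neg, ← Real.exp_add]; congr 1; ring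
  have e3 : Real.exp (-b * z) = (Real.exp (b*z))⁻¹ := by
    rw [← Real.exp_neg]; congr 1; ring
  have hp : 0 < Real.exp (a*z) := Real.exp_pos _
  have hq : 0 < Real.exp (b*z) := Real.exp_pos _
  have hs : 0 < Real.exp (c*z) := Real.exp_pos _
  have hpq : 1 < Real.exp (a*z) * Real.exp (b*z) := by
    rw [← Real.exp_add]
    calc (1:ℝ) = Real.exp 0 := (Real.exp_zero).symm
    _ < _ := Real.exp_lt_exp.mpr (by positivity)
  rw [e1, e2, e3]
  have hden : Real.exp (a*z) - (Real.exp (b*z))⁻¹ ≠ 0 := by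
    have : (Real.exp (b*z))⁻¹ < Real.exp (a*z) := by
      rw [inv_lt_iff_one_lt_mul₀ hq]; linarith
    linarith
  have hpq' : Real.exp (a*z) * Real.exp (b*z) - 1 ≠ 0 := by linarith
  field_simp
  have h' : Real.exp (b*z) * Real.exp (z*a) - 1 ≠ 0 := by rw [mul_comm z a]; linarith
  rw [eq_sub_iff_add_eq, ← add_div, div_eq_iff h']
  ring

lemma gmono (a b c d x y : ℝ) (ha : 0 < a) (hb : 0 < b) (hc : 0 < c) (hd : 0 < d)
    (hx : 0 < x) (hxy : x < y) :
    -(d + a) * (Real.exp (c * x))⁻¹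
      - (a + b) * (Real.exp (c * x) * (Real.exp (a * x) * Real.exp (b * x) - 1))⁻¹
    < -(d + a) * (Real.exp (c * y))⁻¹
      - (a + b) * (Real.exp (c * y) * (Real.exp (a * y) * Real.exp (b * y) - 1))⁻¹ := by
  have hy : 0 < y := hx.trans hxy
  have h1 : (Real.exp (c*y))⁻¹ < (Real.exp (c*x))⁻¹ := by
    apply inv_strictAnti₀ (Real.exp_pos _)
    exact Real.exp_lt_exp.mpr (by nlinarith)
  have hx1 : 1 < Real.exp (a*x) * Real.exp (b*x) := by
    rw [← Real.exp_add]
    calc (1:ℝ) = Real.exp 0 := (Real.exp_zero).symm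
    _ < _ := Real.exp_lt_exp.mpr (by nlinarith)
  have hy1 : 1 < Real.exp (a*y) * Real.exp (b*y) := by
    rw [← Real.exp_add]
    calc (1:ℝ) = Real.exp 0 := (Real.exp_zero).symm
    _ < _ := Real.exp_lt_exp.mpr (by nlinarith)
  have h2 : (Real.exp (c * y) * (Real.exp (a * y) * Real.exp (b * y) - 1))⁻¹
      < (Real.exp (c * x) * (Real.exp (a * x) * Real.exp (b * x) - 1))⁻¹ := by
    apply inv_strictAnti₀ (by nlinarith [Real.exp_pos (c*x)])
    have e1 : Real.exp (c*x) < Real.exp (c*y) := Real.exp_lt_exp.mpr (by nlinarith)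
    have e2 : Real.exp (a*x) < Real.exp (a*y) := Real.exp_lt_exp.mpr (by nlinarith)
    have e3 : Real.exp (b*x) < Real.exp (b*y) := Real.exp_lt_exp.mpr (by nlinarith)
    have step1 : Real.exp (c*x) * (Real.exp (a*x) * Real.exp (b*x) - 1)
        < Real.exp (c*y) * (Real.exp (a*x) * Real.exp (b*x) - 1) :=
      mul_lt_mul_of_pos_right e1 (by linarith)
    have step2 : Real.exp (c*y) * (Real.exp (a*x) * Real.exp (b*x) - 1)
        < Real.exp (c*y) * (Real.exp (a*y) * Real.exp (b*y) - 1) := by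
      apply mul_lt_mul_of_pos_left _ (Real.exp_pos _)
      have := mul_lt_mul'' e2 e3 (Real.exp_pos _).le (Real.exp_pos _).le
      linarith
    linarith
  have m1 := mul_lt_mul_of_pos_left h1 (show (0:ℝ) < d + a by linarith)
  have m2 := mul_lt_mul_of_pos_left h2 (show (0:ℝ) < a + b by linarith)
  linarith

theorem stmt14 (μ σ r u₀ : ℝ) (hσ : 0 < σ) (hr : 0 < r) (hu₀ : 0 < u₀) :
    StrictMonoOn (rho2 μ σ r u₀) (Set.Ioi 0) := by
  intro x hx y hy hxy
  have ha := th1_pos μ σ r u₀ hσ hr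
  have hb := th2_pos μ σ r u₀ hσ hr
  have hc := th1_pos μ σ r 0 hσ hr
  have hd := th2_pos μ σ r 0 hσ hr
  have hx' : (0:ℝ) < x := hx
  have hy' : (0:ℝ) < y := hy
  have ex := key (th1 μ σ r u₀) (th2 μ σ r u₀) (th1 μ σ r 0) (th2 μ σ r 0) x ha hb hx'
  have ey := key (th1 μ σ r u₀) (th2 μ σ r u₀) (th1 μ σ r 0) (th2 μ σ r 0) y ha hb hy'
  unfold rho2
  rw [ex, ey]
  exact gmono _ _ _ _ x y ha hb hc hd hx' hxy
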